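/- arXiv:2009.02496 — 3 statements merged into one kernel-verified Lean document; each statement's English description precedes it below -/
import Mathlib

section
/- Fix an integer N > 6 and define K : (0, +∞) → ℝ by K(s) = 2π − N·arccos(cosh(s)/(2·cosh(s) − 1)). Then K is strictly decreasing, lim_{s→0⁺} K(s) = 2π, lim_{s→+∞} K(s) = (π/3)(6 − N) < 0, and consequently there exists a unique s* > 0 with K(s*) = 0. -/
open Real Filter Set

private lemma denom_pos (s : ℝ) : 0 < 2 * Real.cosh s - 1 := by
  have := Real.one_le_cosh s; linarith

private lemma g_mem {s : ℝ} (hs : 0 < s) :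
    Real.cosh s / (2 * Real.cosh s - 1) ∈ Set.Icc (-1 : ℝ) 1 := by
  have h1 : 1 < Real.cosh s := Real.one_lt_cosh.2 (ne_of_gt hs)
  have hd := denom_pos s
  constructor
  · have hpos : 0 < Real.cosh s / (2 * Real.cosh s - 1) := by positivity
    linarith
  · rw [div_le_one hd]; linarith

private lemma g_anti {a b : ℝ} (ha : 0 < a) (hab : a < b) :
    Real.cosh b / (2 * Real.cosh b - 1) < Real.cosh a / (2 * Real.cosh a - 1) := by
  have hc : Real.cosh a < Real.cosh b := by
    rw [Real.cosh_lt_cosh]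
    rw [abs_of_pos ha, abs_of_pos (ha.trans hab)]; exact hab
  rw [div_lt_div_iff₀ (denom_pos b) (denom_pos a)]
  nlinarith

private lemma cosh_atTop : Filter.Tendsto Real.cosh Filter.atTop Filter.atTop := by
  apply Filter.tendsto_atTop_mono (fun x => ?_)
    (Real.tendsto_exp_atTop.atTop_div_const two_pos)
  rw [Real.cosh_eq]
  have := Real.exp_pos (-x)
  linarith

theorem stmt_2 (N : ℤ) (hN : 6 < N)
    (K : ℝ → ℝ)
    (hK : ∀ s : ℝ, K s = 2 * Real.pi -
      (N : ℝ) * Real.arccos (Real.cosh s / (2 * Real.cosh s - 1))) :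
    StrictAntiOn K (Set.Ioi 0) ∧
    Filter.Tendsto K (nhdsWithin 0 (Set.Ioi 0)) (nhds (2 * Real.pi)) ∧
    Filter.Tendsto K Filter.atTop (nhds (Real.pi / 3 * (6 - (N : ℝ)))) ∧
    Real.pi / 3 * (6 - (N : ℝ)) < 0 ∧
    (∃! s : ℝ, s ∈ Set.Ioi (0 : ℝ) ∧ K s = 0) := by
  have hKfun : K = fun s => 2 * Real.pi -
      (N : ℝ) * Real.arccos (Real.cosh s / (2 * Real.cosh s - 1)) := funext hK
  have hNpos : (0 : ℝ) < (N : ℝ) := by exact_mod_cast (by omega : (0:ℤ) < N)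
  -- strict anti
  have hanti : StrictAntiOn K (Set.Ioi 0) := by
    intro a ha b hb hab
    rw [hK a, hK b]
    have harc := Real.strictAntiOn_arccos (g_mem (ha.trans hab)) (g_mem ha)
      (g_anti ha hab)
    nlinarith [harc]
  -- continuity
  have hcont : Continuous K := by
    rw [hKfun]
    apply continuous_const.sub
    apply continuous_const.mul
    exact Real.continuous_arccos.comp
      (Real.continuous_cosh.div
        ((continuous_const.mul Real.continuous_cosh).sub continuous_const)
        (fun s => (denom_pos s).ne'))
  -- limit at 0
  have hK0 : K 0 = 2 * Real.pi := by
    rw [hK 0]; norm_num [Real.cosh_zero, Real.arccos_one]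
  have hlim0 : Filter.Tendsto K (nhdsWithin 0 (Set.Ioi 0)) (nhds (2 * Real.pi)) := by
    have h := Filter.Tendsto.mono_left (hcont.tendsto 0)
      (nhdsWithin_le_nhds (s := Set.Ioi 0))
    rwa [hK0] at h
  -- limit at atTop
  have hhalf : Filter.Tendsto (fun x : ℝ => x / (2 * x - 1)) Filter.atTop (nhds (1/2)) := by
    have h1 : Filter.Tendsto (fun x : ℝ => 4 * x - 2) Filter.atTop Filter.atTop :=
      Filter.tendsto_atTop_add_const_right _ (-2)
        (Filter.Tendsto.const_mul_atTop (by norm_num) tendsto_id)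
    have h2 : Filter.Tendsto (fun x : ℝ => 1/2 + (4 * x - 2)⁻¹) Filter.atTop (nhds (1/2)) := by
      have := tendsto_inv_atTop_zero.comp h1
      simpa using tendsto_const_nhds.add this
    apply h2.congr'
    filter_upwards [Filter.eventually_ge_atTop (1 : ℝ)] with x hx
    have hd : (2 : ℝ) * x - 1 ≠ 0 := by intro h; nlinarith
    have hd4 : (4 : ℝ) * x - 2 ≠ 0 := by intro h; nlinarith
    field_simp
    ring
  have hlimT : Filter.Tendsto K Filter.atTop (nhds (Real.pi / 3 * (6 - (N : ℝ)))) := by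
    have hg : Filter.Tendsto (fun s => Real.cosh s / (2 * Real.cosh s - 1))
        Filter.atTop (nhds (1/2)) := hhalf.comp cosh_atTop
    have harc13 : Real.arccos (1/2) = Real.pi / 3 := by
      rw [← Real.cos_pi_div_three, Real.arccos_cos (by positivity)
        (by linarith [Real.pi_pos])]
    have : Filter.Tendsto K Filter.atTop
        (nhds (2 * Real.pi - (N : ℝ) * Real.arccos (1/2))) := by
      rw [hKfun]
      exact tendsto_const_nhds.sub
        (tendsto_const_nhds.mul ((Real.continuous_arccos.tendsto _).comp hg))
    rw [harc13] at this
    convert this using 2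
    ring
  have hneg : Real.pi / 3 * (6 - (N : ℝ)) < 0 := by
    apply mul_neg_of_pos_of_neg
    · positivity
    · have : (6 : ℝ) < (N : ℝ) := by exact_mod_cast hN
      linarith
  refine ⟨hanti, hlim0, hlimT, hneg, ?_⟩
  -- existence
  have hpos2π : (0 : ℝ) < 2 * Real.pi := by positivity
  obtain ⟨a, haK, ha⟩ :=
    ((hlim0.eventually_const_lt (by positivity : (0:ℝ) < 2 * Real.pi)).and
      self_mem_nhdsWithin).exists
  obtain ⟨b, hbK, hba⟩ :=
    ((hlimT.eventually_lt_const hneg).and (Filter.eventually_gt_atTop a)).exists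
  have ha0 : (0:ℝ) < a := ha
  have hb0 : (0:ℝ) < b := ha0.trans hba
  have hKmem : (0:ℝ) ∈ Set.Icc (K b) (K a) := ⟨hbK.le, haK.le⟩
  obtain ⟨s, hsIcc, hKs⟩ := intermediate_value_Icc' hba.le hcont.continuousOn hKmem
  have hs0 : s ∈ Set.Ioi (0:ℝ) := lt_of_lt_of_le ha0 hsIcc.1
  refine ⟨s, ⟨hs0, hKs⟩, ?_⟩
  rintro y ⟨hy0, hKy⟩
  exact hanti.injOn hy0 hs0 (hKy.trans hKs.symm)
end

section
/- Let H : ℝⁿ → ℝ be C¹ and convex, and suppose H is C² and strictly convex (positive definite Hessian) in a neighborhood of some point x₀ with ∇H(x₀) = 0. If x* ∈ ℝⁿ satisfies ∇H(x*) = 0, then x* = x₀. -/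
open Metric

lemma crit_isMin {n : ℕ} (H : EuclideanSpace ℝ (Fin n) → ℝ)
    (hH : ContDiff ℝ 1 H) (hconv : ConvexOn ℝ Set.univ H)
    (x : EuclideanSpace ℝ (Fin n)) (hx : gradient H x = 0)
    (y : EuclideanSpace ℝ (Fin n)) : H x ≤ H y := by
  have hdiff : DifferentiableAt ℝ H x := (hH.differentiable one_ne_zero) x
  have hf0 : fderiv ℝ H x = 0 := by
    have := hdiff.hasGradientAt
    rw [hx] at this
    have h2 := this.hasFDerivAt.fderiv
    simpa using h2
  -- derivative of g t = H (x + t • (y - x)) at 0 is 0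
  set g : ℝ → ℝ := fun t => H (x + t • (y - x)) with hg
  have hc : HasDerivAt (fun t : ℝ => x + t • (y - x)) (y - x) 0 := by
    simpa using ((hasDerivAt_id (0:ℝ)).smul_const (y - x)).const_add x
  have hgd : HasDerivAt g 0 0 := by
    have hd : HasFDerivAt H (fderiv ℝ H x) (x + (0:ℝ) • (y - x)) := by
      simpa using hdiff.hasFDerivAt
    have := hd.comp_hasDerivAt 0 hc
    have h2 : HasDerivAt (H ∘ fun t : ℝ => x + t • (y - x)) 0 0 := by simpa [hf0] using this
    exact h2
  have hslope : Filter.Tendsto (slope g 0) (nhdsWithin 0 (Set.Ioi 0)) (nhds 0) := by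
    have := hasDerivAt_iff_tendsto_slope.mp hgd
    exact this.mono_left (nhdsWithin_mono _ (fun t ht => ne_of_gt ht))
  have hle : ∀ t ∈ Set.Ioo (0:ℝ) 1, slope g 0 t ≤ H y - H x := by
    intro t ht
    have hconvt := hconv.2 (Set.mem_univ x) (Set.mem_univ y)
      (by linarith [ht.1, ht.2] : (0:ℝ) ≤ 1 - t) (le_of_lt ht.1) (by ring)
    have hgt : g t ≤ (1 - t) * H x + t * H y := by
      have : x + t • (y - x) = (1 - t) • x + t • y := by
        module
      rw [hg]; simp only [this]; exact hconvt
    have hg0 : g 0 = H x := by simp [hg]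
    rw [slope_def_field, hg0, sub_zero, div_le_iff₀ ht.1]
    nlinarith [hgt]
  have : (0:ℝ) ≤ H y - H x := by
    refine le_of_tendsto hslope ?_
    filter_upwards [Ioo_mem_nhdsGT_of_mem (Set.mem_Ico.mpr ⟨le_rfl, one_pos⟩)] with t ht
    exact hle t ht
  linarith

theorem stmt_7 (n : ℕ) (H : EuclideanSpace ℝ (Fin n) → ℝ)
    (hH : ContDiff ℝ 1 H) (hconv : ConvexOn ℝ Set.univ H)
    (x₀ : EuclideanSpace ℝ (Fin n))
    (hloc : ∃ ε > 0, ContDiffOn ℝ 2 H (Metric.ball x₀ ε) ∧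
      StrictConvexOn ℝ (Metric.ball x₀ ε) H)
    (hx₀ : gradient H x₀ = 0)
    (x' : EuclideanSpace ℝ (Fin n)) (hx' : gradient H x' = 0) :
    x' = x₀ := by
  by_contra hne
  obtain ⟨ε, hε, _, hsc⟩ := hloc
  have hmin₀ := crit_isMin H hH hconv x₀ hx₀
  have hmin' := crit_isMin H hH hconv x' hx'
  have heq : H x' = H x₀ := le_antisymm (hmin' x₀) (hmin₀ x')
  have hnorm : 0 < ‖x' - x₀‖ := by
    simpa [sub_eq_zero] using hne
  set t : ℝ := min (ε / (2 * ‖x' - x₀‖)) (1/2) with ht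
  have ht0 : 0 < t := lt_min (by positivity) (by norm_num)
  have ht1 : t < 1 := lt_of_le_of_lt (min_le_right _ _) (by norm_num)
  set z := x₀ + t • (x' - x₀) with hz
  have hzball : z ∈ ball x₀ ε := by
    rw [mem_ball, dist_eq_norm]
    have : z - x₀ = t • (x' - x₀) := by rw [hz]; abel
    rw [this, norm_smul, Real.norm_eq_abs, abs_of_pos ht0]
    calc t * ‖x' - x₀‖ ≤ (ε / (2 * ‖x' - x₀‖)) * ‖x' - x₀‖ := by
          exact mul_le_mul_of_nonneg_right (min_le_left _ _) (le_of_lt hnorm)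
      _ = ε / 2 := by field_simp
      _ < ε := by linarith
  have hzne : z ≠ x₀ := by
    intro h
    apply hne
    have : t • (x' - x₀) = 0 := by
      have := h; rw [hz] at this; simpa using this
    have := smul_eq_zero.mp this
    rcases this with h1 | h2
    · exact absurd h1 (ne_of_gt ht0)
    · rw [sub_eq_zero] at h2; exact h2
  have hzval : H z = H x₀ := by
    have hle : H z ≤ H x₀ := by
      have := hconv.2 (Set.mem_univ x₀) (Set.mem_univ x')
        (by linarith : (0:ℝ) ≤ 1 - t) (le_of_lt ht0) (by ring)
      have hzeq : z = (1 - t) • x₀ + t • x' := by rw [hz]; module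
      rw [hzeq]
      calc H ((1 - t) • x₀ + t • x') ≤ (1 - t) * H x₀ + t * H x' := this
        _ = H x₀ := by rw [heq]; ring
    exact le_antisymm hle (hmin₀ z)
  -- strict convexity contradiction at midpoint
  have hx₀ball : x₀ ∈ ball x₀ ε := mem_ball_self hε
  have hmid := hsc.2 hx₀ball hzball hzne.symm (by norm_num : (0:ℝ) < 1/2)
    (by norm_num : (0:ℝ) < 1/2) (by norm_num)
  rw [hzval] at hmid
  simp only [smul_eq_mul] at hmid
  have : H x₀ ≤ H ((1/2 : ℝ) • x₀ + (1/2 : ℝ) • z) := hmin₀ _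
  have : (1/2 : ℝ) * H x₀ + (1/2 : ℝ) * H x₀ = H x₀ := by ring
  linarith [hmin₀ ((1/2 : ℝ) • x₀ + (1/2 : ℝ) • z)]
end

section
/- Let f : ℝⁿ → ℝ be a C¹ convex function with ∇f(x₀) = 0 for some x₀ ∈ ℝⁿ, and suppose f is C² and strictly convex in a neighborhood of x₀. Then f is proper: f(x) → +∞ as ‖x‖ → +∞. -/
open Filter

theorem stmt_8 (n : ℕ) (f : EuclideanSpace ℝ (Fin n) → ℝ)
    (hf : ContDiff ℝ 1 f) (hconv : ConvexOn ℝ Set.univ f)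
    (x₀ : EuclideanSpace ℝ (Fin n)) (hx₀ : gradient f x₀ = 0)
    (hloc : ∃ ε > 0, ContDiffOn ℝ 2 f (Metric.ball x₀ ε) ∧
      StrictConvexOn ℝ (Metric.ball x₀ ε) f) :
    Filter.Tendsto f (Filter.cocompact (EuclideanSpace ℝ (Fin n))) Filter.atTop := by
  rcases Nat.eq_zero_or_pos n with hn | hn
  · subst hn
    haveI : Subsingleton (EuclideanSpace ℝ (Fin 0)) :=
      ⟨fun x y => PiLp.ext fun i => Fin.elim0 i⟩
    haveI : CompactSpace (EuclideanSpace ℝ (Fin 0)) := by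
      haveI : Finite (EuclideanSpace ℝ (Fin 0)) := Finite.of_subsingleton
      exact Finite.compactSpace
    rw [Filter.cocompact_eq_bot]
    exact tendsto_bot
  -- fderiv is zero at x₀
  have hfd : fderiv ℝ f x₀ = 0 := by
    have h := congrArg (InnerProductSpace.toDual ℝ (EuclideanSpace ℝ (Fin n))) hx₀
    simpa [gradient] using h
  -- x₀ is a global minimum
  have hmin : ∀ y, f x₀ ≤ f y := by
    intro y
    rcases eq_or_ne y x₀ with rfl | hne
    · exact le_rfl
    · set g : ℝ → ℝ := fun t => f (t • (y - x₀) + x₀) with hg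
      have hgc : ConvexOn ℝ Set.univ g := by
        have h := hconv.comp_affineMap (AffineMap.lineMap x₀ y)
        have he : g = f ∘ AffineMap.lineMap x₀ y := by
          funext t
          simp [g, Function.comp, AffineMap.lineMap_apply]
        rw [he]
        exact h
      have hL : HasDerivAt (fun t : ℝ => t • (y - x₀) + x₀) (y - x₀) 0 := by
        have h1 : HasDerivAt (fun t : ℝ => t • (y - x₀)) ((1 : ℝ) • (y - x₀)) 0 :=
          (hasDerivAt_id 0).smul_const (y - x₀)
        simpa using h1.add_const x₀
      have hx0pt : (0 : ℝ) • (y - x₀) + x₀ = x₀ := by simp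
      have hF : HasFDerivAt f (fderiv ℝ f x₀) ((0 : ℝ) • (y - x₀) + x₀) := by
        rw [hx0pt]
        exact (hf.differentiable one_ne_zero x₀).hasFDerivAt
      have hgD : HasDerivAt g (fderiv ℝ f x₀ (y - x₀)) 0 := hF.comp_hasDerivAt 0 hL
      have hslope : fderiv ℝ f x₀ (y - x₀) ≤ slope g 0 1 :=
        hgc.le_slope_of_hasDerivAt (Set.mem_univ _) (Set.mem_univ _) one_pos hgD
      have h0 : fderiv ℝ f x₀ (y - x₀) = 0 := by rw [hfd]; rfl
      have hg0 : g 0 = f x₀ := by simp [g]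
      have hg1 : g 1 = f y := by simp [g]
      rw [h0] at hslope
      have : (0 : ℝ) ≤ g 1 - g 0 := by
        simpa [slope, sub_zero] using hslope
      rw [hg0, hg1] at this
      linarith
  obtain ⟨ε, hε, _, hsc⟩ := hloc
  set r : ℝ := ε / 2 with hr
  have hr0 : 0 < r := by positivity
  -- f is strictly bigger than f x₀ on the sphere of radius r
  have hsphere : ∀ y ∈ Metric.sphere x₀ r, f x₀ < f y := by
    intro y hy
    have hyd : dist y x₀ = r := hy
    have hyne : y ≠ x₀ := by
      intro h; rw [h, dist_self] at hyd; linarith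
    have hymem : y ∈ Metric.ball x₀ ε := by
      rw [Metric.mem_ball, hyd]; linarith
    have hx₀mem : x₀ ∈ Metric.ball x₀ ε := Metric.mem_ball_self hε
    have hmid := hsc.2 hymem hx₀mem hyne (by norm_num : (0:ℝ) < 1/2)
      (by norm_num : (0:ℝ) < 1/2) (by norm_num)
    have hge := hmin ((1/2 : ℝ) • y + (1/2 : ℝ) • x₀)
    simp only [smul_eq_mul] at hmid
    linarith
  -- minimum of f on the sphere
  haveI : Nontrivial (EuclideanSpace ℝ (Fin n)) := by
    refine ⟨EuclideanSpace.single ⟨0, hn⟩ 1, 0, ?_⟩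
    intro h
    have := congrArg (fun v => v ⟨0, hn⟩) h
    simp [EuclideanSpace.single] at this
  have hsne : (Metric.sphere x₀ r).Nonempty :=
    NormedSpace.sphere_nonempty.mpr hr0.le
  obtain ⟨y₀, hy₀s, hy₀min⟩ := (isCompact_sphere x₀ r).exists_isMinOn hsne
    hf.continuous.continuousOn
  set m : ℝ := f y₀ with hm
  have hm0 : f x₀ < m := hsphere y₀ hy₀s
  set c : ℝ := (m - f x₀) / r with hc
  have hc0 : 0 < c := div_pos (by linarith) hr0
  -- growth estimate outside the ball of radius r
  have hgrow : ∀ x, r ≤ ‖x - x₀‖ → f x₀ + c * ‖x - x₀‖ ≤ f x := by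
    intro x hx
    have hxn : 0 < ‖x - x₀‖ := lt_of_lt_of_le hr0 hx
    set t : ℝ := r / ‖x - x₀‖ with ht
    have ht0 : 0 < t := div_pos hr0 hxn
    have ht1 : t ≤ 1 := by
      rw [ht, div_le_one hxn]; exact hx
    set y : EuclideanSpace ℝ (Fin n) := x₀ + t • (x - x₀) with hy
    have hys : y ∈ Metric.sphere x₀ r := by
      simp only [Metric.mem_sphere, hy, dist_eq_norm]
      rw [add_sub_cancel_left, norm_smul, Real.norm_eq_abs, abs_of_pos ht0, ht,
        div_mul_cancel₀ _ (ne_of_gt hxn)]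
    have hconvest : f y ≤ (1 - t) * f x₀ + t * f x := by
      have := hconv.2 (Set.mem_univ x₀) (Set.mem_univ x) (by linarith : (0:ℝ) ≤ 1 - t)
        ht0.le (by ring)
      simp only [smul_eq_mul] at this
      have hyeq : (1 - t) • x₀ + t • x = y := by
        rw [hy]; module
      rw [hyeq] at this
      exact this
    have hmy : m ≤ f y := hy₀min hys
    have key : m ≤ (1 - t) * f x₀ + t * f x := le_trans hmy hconvest
    have hfx : f x₀ + (m - f x₀) / t ≤ f x := by
      have h1 : m - f x₀ ≤ (f x - f x₀) * t := by nlinarith [key]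
      have h2 : (m - f x₀) / t ≤ f x - f x₀ := (div_le_iff₀ ht0).mpr h1
      linarith
    have hct : c * ‖x - x₀‖ = (m - f x₀) / t := by
      rw [hc, ht]
      field_simp
    linarith [hfx, hct.le, hct.ge]
  -- conclude
  have haux : Tendsto (fun x : EuclideanSpace ℝ (Fin n) => f x₀ + c * ‖x - x₀‖)
      (cocompact (EuclideanSpace ℝ (Fin n))) atTop := by
    apply tendsto_atTop_add_const_left
    apply Tendsto.const_mul_atTop hc0
    apply tendsto_atTop_mono (fun x => norm_sub_norm_le x x₀)
    exact tendsto_atTop_add_const_right _ _ tendsto_norm_cocompact_atTop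
  refine tendsto_atTop_mono' _ ?_ haux
  have hmem : {x : EuclideanSpace ℝ (Fin n) | r ≤ ‖x - x₀‖} ∈
      cocompact (EuclideanSpace ℝ (Fin n)) := by
    rw [Filter.mem_cocompact]
    refine ⟨Metric.closedBall x₀ r, isCompact_closedBall x₀ r, ?_⟩
    intro x hx
    simp only [Set.mem_compl_iff, Metric.mem_closedBall, not_le, dist_eq_norm] at hx
    exact le_of_lt hx
  filter_upwards [hmem] with x hx
  exact hgrow x hx
end
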